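/- arXiv:2210.14402 — 2 statements merged into one kernel-verified Lean document; each statement's English description precedes it below -/
import Mathlib

section
/- Let a ∈ ℝ and b > 0. Then the power series ₁F₁(a;b;t) = ∑_{n=0}^∞ ((a)_n/((b)_n n!)) t^n converges for every real t, the resulting function is differentiable on ℝ, and its derivative satisfies (d/dt) ₁F₁(a;b;t) = (a/b) · ₁F₁(a+1; b+1; t) for all t ∈ ℝ. -/
open Polynomial Filter

/-- The confluent hypergeometric function `₁F₁(a; b; t) = ∑ (a)_n / ((b)_n n!) tⁿ`,
where `(x)_n` is the ascending Pochhammer symbol. -/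
noncomputable def oneF1 (a b t : ℝ) : ℝ :=
  ∑' n : ℕ, (ascPochhammer ℝ n).eval a / ((ascPochhammer ℝ n).eval b * (n.factorial : ℝ)) * t ^ n

private lemma abs_asc_le {a A : ℝ} (hA : |a| ≤ A) (n : ℕ) :
    |(ascPochhammer ℝ n).eval a| ≤ (ascPochhammer ℝ n).eval A := by
  induction n with
  | zero => simp
  | succ n ih =>
    rw [ascPochhammer_succ_eval, ascPochhammer_succ_eval, abs_mul]
    have h1 : |a + (n : ℝ)| ≤ A + n := by
      have := abs_add_le a (n : ℝ)
      have h2 : |(n : ℝ)| = n := abs_of_nonneg (Nat.cast_nonneg n)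
      linarith
    exact mul_le_mul ih h1 (abs_nonneg _) (le_trans (abs_nonneg _) ih)

private lemma asc_ratio {b A : ℝ} (hb : 0 < b) (hbA : b ≤ A) (n : ℕ) :
    b ^ n * (ascPochhammer ℝ n).eval A ≤ A ^ n * (ascPochhammer ℝ n).eval b := by
  induction n with
  | zero => simp
  | succ n ih =>
    rw [ascPochhammer_succ_eval, ascPochhammer_succ_eval, pow_succ, pow_succ]
    have hPb := ascPochhammer_pos n b hb
    have hPA := ascPochhammer_pos n A (hb.trans_le hbA)
    have hbn := pow_pos hb n
    have hAn := pow_pos (hb.trans_le hbA) n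
    have hn : (0:ℝ) ≤ n := Nat.cast_nonneg n
    have key : b * (A + n) ≤ A * (b + n) := by nlinarith
    nlinarith [mul_le_mul_of_nonneg_right ih (mul_nonneg hb.le (by linarith : (0:ℝ) ≤ A + n)),
      mul_le_mul_of_nonneg_left key (mul_nonneg hAn.le hPb.le)]

private lemma asc_succ_left_eval (n : ℕ) (x : ℝ) :
    (ascPochhammer ℝ (n+1)).eval x = x * (ascPochhammer ℝ n).eval (x+1) := by
  rw [ascPochhammer_succ_left]
  simp [eval_comp]

/-- Master bound: the series terms (with an extra `n+1` factor) are dominated by `xⁿ/n!`. -/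
private lemma coeff_bound (a b : ℝ) (hb : 0 < b) {R : ℝ} (hR : 0 ≤ R) (n : ℕ) :
    ((n:ℝ)+1) * (|(ascPochhammer ℝ n).eval a| /
      ((ascPochhammer ℝ n).eval b * (n.factorial : ℝ))) * R ^ n
      ≤ (2 * max (|a|+1) b * R / b) ^ n / (n.factorial : ℝ) := by
  set A := max (|a|+1) b with hA
  have hAa : |a| ≤ A := le_trans (by linarith [abs_nonneg a]) (le_max_left _ _)
  have hbA : b ≤ A := le_max_right _ _
  have hApos : 0 < A := lt_of_lt_of_le hb hbA
  have hPb := ascPochhammer_pos n b hb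
  have hfac : (0:ℝ) < (n.factorial : ℝ) := by exact_mod_cast n.factorial_pos
  have h1 : |(ascPochhammer ℝ n).eval a| ≤ (ascPochhammer ℝ n).eval A := abs_asc_le hAa n
  have h2 : b ^ n * (ascPochhammer ℝ n).eval A ≤ A ^ n * (ascPochhammer ℝ n).eval b :=
    asc_ratio hb hbA n
  have h3 : ((n:ℝ)+1) ≤ 2 ^ n := by
    exact_mod_cast Nat.succ_le_of_lt (Nat.lt_two_pow_self (n := n))
  have hrw : (2 * A * R / b) ^ n / (n.factorial : ℝ)
      = (2:ℝ)^n * A^n * R^n / (b^n * (n.factorial : ℝ)) := by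
    rw [div_pow, mul_pow, mul_pow]; ring
  rw [hrw]
  have hLHS : ((n:ℝ)+1) * (|(ascPochhammer ℝ n).eval a| /
      ((ascPochhammer ℝ n).eval b * (n.factorial : ℝ))) * R ^ n
      = ((n:ℝ)+1) * |(ascPochhammer ℝ n).eval a| * R^n /
        ((ascPochhammer ℝ n).eval b * (n.factorial : ℝ)) := by ring
  rw [hLHS, div_le_div_iff₀ (by positivity) (by positivity)]
  have c1 : ((n:ℝ)+1) * |(ascPochhammer ℝ n).eval a| ≤ 2^n * (ascPochhammer ℝ n).eval A :=
    mul_le_mul h3 h1 (abs_nonneg _) (by positivity)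
  have c2 : ((n:ℝ)+1) * |(ascPochhammer ℝ n).eval a| * (R^n * b^n)
      ≤ 2^n * (ascPochhammer ℝ n).eval A * (R^n * b^n) :=
    mul_le_mul_of_nonneg_right c1 (by positivity)
  have c3 : (2:ℝ)^n * R^n * (b ^ n * (ascPochhammer ℝ n).eval A)
      ≤ 2^n * R^n * (A ^ n * (ascPochhammer ℝ n).eval b) :=
    mul_le_mul_of_nonneg_left h2 (by positivity)
  nlinarith [mul_le_mul_of_nonneg_right c2 hfac.le, mul_le_mul_of_nonneg_right c3 hfac.le]

private noncomputable def cf (a b : ℝ) (n : ℕ) : ℝ :=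
  (ascPochhammer ℝ n).eval a / ((ascPochhammer ℝ n).eval b * (n.factorial : ℝ))

private lemma abs_cf (a b : ℝ) (hb : 0 < b) (n : ℕ) :
    |cf a b n| = |(ascPochhammer ℝ n).eval a| /
      ((ascPochhammer ℝ n).eval b * (n.factorial : ℝ)) := by
  have hPb := ascPochhammer_pos n b hb
  have hfac : (0:ℝ) < (n.factorial : ℝ) := by exact_mod_cast n.factorial_pos
  rw [cf, abs_div, abs_of_pos (mul_pos hPb hfac)]

theorem stmt7 (a b : ℝ) (hb : 0 < b) :
    (∀ t : ℝ, Summable fun n : ℕ =>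
      (ascPochhammer ℝ n).eval a / ((ascPochhammer ℝ n).eval b * (n.factorial : ℝ)) * t ^ n) ∧
    (∀ t : ℝ, HasDerivAt (fun s : ℝ => oneF1 a b s)
      (a / b * oneF1 (a + 1) (b + 1) t) t) := by
  have hsum : ∀ t : ℝ, Summable fun n : ℕ => cf a b n * t ^ n := by
    intro t
    refine Summable.of_norm_bounded
      (Real.summable_pow_div_factorial (2 * max (|a|+1) b * |t| / b)) fun n => ?_
    have h1 : ‖cf a b n * t ^ n‖ = |cf a b n| * |t| ^ n := by
      rw [norm_mul, norm_pow, Real.norm_eq_abs, Real.norm_eq_abs]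
    rw [h1, abs_cf a b hb]
    calc |(ascPochhammer ℝ n).eval a| /
          ((ascPochhammer ℝ n).eval b * (n.factorial : ℝ)) * |t| ^ n
        ≤ ((n:ℝ)+1) * (|(ascPochhammer ℝ n).eval a| /
          ((ascPochhammer ℝ n).eval b * (n.factorial : ℝ))) * |t| ^ n := by
          have hPb := ascPochhammer_pos n b hb
          have hfac : (0:ℝ) < (n.factorial : ℝ) := by exact_mod_cast n.factorial_pos
          have : (0:ℝ) ≤ |(ascPochhammer ℝ n).eval a| /
              ((ascPochhammer ℝ n).eval b * (n.factorial : ℝ)) * |t| ^ n := by positivity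
          nlinarith [Nat.cast_nonneg (α := ℝ) n]
      _ ≤ _ := coeff_bound a b hb (abs_nonneg t) n
  refine ⟨hsum, fun t => ?_⟩
  set R : ℝ := |t| + 1 with hR
  have hR1 : (1:ℝ) ≤ R := by rw [hR]; linarith [abs_nonneg t]
  have hRpos : (0:ℝ) < R := lt_of_lt_of_le one_pos hR1
  have ht : t ∈ Metric.ball (0:ℝ) R := by
    simp [Metric.mem_ball, Real.dist_0_eq_abs, hR]
  have hu := Real.summable_pow_div_factorial (2 * max (|a|+1) b * R / b)
  have hbound : ∀ (n : ℕ) (x : ℝ), x ∈ Metric.ball (0:ℝ) R →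
      ‖cf a b n * ((n:ℝ) * x ^ (n-1))‖ ≤ (2 * max (|a|+1) b * R / b) ^ n / (n.factorial : ℝ) := by
    intro n x hx
    have hxR : |x| ≤ R := by
      have := Metric.mem_ball.mp hx
      rw [Real.dist_0_eq_abs] at this
      linarith
    have h1 : ‖cf a b n * ((n:ℝ) * x ^ (n-1))‖ = |cf a b n| * ((n:ℝ) * |x| ^ (n-1)) := by
      simp [Real.norm_eq_abs, abs_mul, abs_pow, Nat.abs_cast]
    have h2 : (n:ℝ) * |x| ^ (n-1) ≤ ((n:ℝ)+1) * R ^ n := by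
      have e1 : |x| ^ (n-1) ≤ R ^ (n-1) := pow_le_pow_left₀ (abs_nonneg x) hxR _
      have e2 : R ^ (n-1) ≤ R ^ n := pow_le_pow_right₀ hR1 (Nat.sub_le n 1)
      have e3 : (0:ℝ) ≤ R ^ n := by positivity
      nlinarith [pow_nonneg (abs_nonneg x) (n-1), Nat.cast_nonneg (α := ℝ) n]
    rw [h1, abs_cf a b hb]
    calc |(ascPochhammer ℝ n).eval a| /
          ((ascPochhammer ℝ n).eval b * (n.factorial : ℝ)) * ((n:ℝ) * |x| ^ (n-1))
        ≤ ((n:ℝ)+1) * (|(ascPochhammer ℝ n).eval a| /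
          ((ascPochhammer ℝ n).eval b * (n.factorial : ℝ))) * R ^ n := by
          have hPb := ascPochhammer_pos n b hb
          have hfac : (0:ℝ) < (n.factorial : ℝ) := by exact_mod_cast n.factorial_pos
          have hq : (0:ℝ) ≤ |(ascPochhammer ℝ n).eval a| /
              ((ascPochhammer ℝ n).eval b * (n.factorial : ℝ)) := by positivity
          calc _ ≤ |(ascPochhammer ℝ n).eval a| /
                ((ascPochhammer ℝ n).eval b * (n.factorial : ℝ)) * (((n:ℝ)+1) * R ^ n) :=
              mul_le_mul_of_nonneg_left h2 hq
            _ = _ := by ring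
      _ ≤ _ := coeff_bound a b hb hRpos.le n
  have hd := hasDerivAt_tsum_of_isPreconnected hu Metric.isOpen_ball
    (convex_ball (0:ℝ) R).isPreconnected
    (g := fun n x => cf a b n * x ^ n) (g' := fun n x => cf a b n * ((n:ℝ) * x ^ (n-1)))
    (fun n y _ => (hasDerivAt_pow n y).const_mul (cf a b n))
    hbound (Metric.mem_ball_self hRpos) (hsum 0) ht
  have hsumd : Summable (fun n : ℕ => cf a b n * ((n:ℝ) * t ^ (n-1))) :=
    Summable.of_norm_bounded hu fun n => hbound n t ht
  have heq : (∑' n : ℕ, cf a b n * ((n:ℝ) * t ^ (n-1))) = a / b * oneF1 (a+1) (b+1) t := by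
    rw [Summable.tsum_eq_zero_add hsumd]
    simp only [Nat.cast_zero, zero_mul, mul_zero, zero_add]
    rw [oneF1, ← tsum_mul_left]
    refine tsum_congr fun n => ?_
    have hPb1 := ascPochhammer_pos n (b+1) (by linarith)
    have hfac : ((n.factorial : ℝ)) ≠ 0 := by
      exact_mod_cast n.factorial_ne_zero
    have hn1 : ((n:ℝ)+1) ≠ 0 := by positivity
    rw [cf, asc_succ_left_eval n a, asc_succ_left_eval n b, Nat.add_sub_cancel]
    rw [Nat.factorial_succ]
    push_cast
    field_simp
  exact heq ▸ hd
end

section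
/- Let d ≥ 2 and 1 ≤ m < d be integers, let s, q : ℝ^m → ℝ^{d−m} be differentiable functions, ζ ∈ ℝ^{d−m}, and β ∈ ℝ with |β| < 1. Define T : ℝ^m × ℝ^{d−m} → ℝ^m × ℝ^{d−m} by T(x₁, x₂) = (x₁, x₂ ⊙ (𝟙 + β tanh(s(x₁))) + e^{ζ} ⊙ tanh(q(x₁))). Then T is differentiable at every point (x₁, x₂) ∈ ℝ^d and the determinant of its Fréchet derivative equals ∏_{i=1}^{d−m} (1 + β tanh(s_i(x₁))), which is strictly positive. -/
lemma myDiffTanh : Differentiable ℝ Real.tanh := by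
  have h : Real.tanh = fun x => Real.sinh x / Real.cosh x :=
    funext Real.tanh_eq_sinh_div_cosh
  rw [h]
  exact Real.differentiable_sinh.div Real.differentiable_cosh
    (fun x => (Real.cosh_pos x).ne')

lemma myAbsTanhLe (x : ℝ) : |Real.tanh x| ≤ 1 := by
  rw [Real.tanh_eq_sinh_div_cosh, abs_div, abs_of_pos (Real.cosh_pos x),
    div_le_one (Real.cosh_pos x), abs_le, Real.sinh_eq, Real.cosh_eq]
  constructor <;> nlinarith [Real.exp_pos x, Real.exp_pos (-x)]

/-- Generic form of the main theorem. -/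
lemma coupling_main (m k : ℕ) (s q : (Fin m → ℝ) → Fin k → ℝ)
    (hs : Differentiable ℝ s) (hq : Differentiable ℝ q)
    (ζ : Fin k → ℝ) (β : ℝ) (hβ : |β| < 1)
    (p : (Fin m → ℝ) × (Fin k → ℝ)) :
    DifferentiableAt ℝ (fun p : (Fin m → ℝ) × (Fin k → ℝ) => (p.1, fun i =>
      p.2 i * (1 + β * Real.tanh (s p.1 i)) + Real.exp (ζ i) * Real.tanh (q p.1 i))) p ∧
    (fderiv ℝ (fun p : (Fin m → ℝ) × (Fin k → ℝ) => (p.1, fun i =>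
      p.2 i * (1 + β * Real.tanh (s p.1 i)) + Real.exp (ζ i) * Real.tanh (q p.1 i))) p).det =
      ∏ i : Fin k, (1 + β * Real.tanh (s p.1 i)) ∧
    0 < ∏ i : Fin k, (1 + β * Real.tanh (s p.1 i)) := by
  have hpos : ∀ i, 0 < 1 + β * Real.tanh (s p.1 i) := by
    intro i
    have h1 : |β * Real.tanh (s p.1 i)| < 1 := by
      rw [abs_mul]
      calc |β| * |Real.tanh (s p.1 i)| ≤ |β| * 1 :=
            mul_le_mul_of_nonneg_left (myAbsTanhLe _) (abs_nonneg β)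
        _ = |β| := mul_one _
        _ < 1 := hβ
    have := (abs_lt.1 h1).1
    linarith
  have hsi : ∀ i, Differentiable ℝ (fun x : Fin m → ℝ => s x i) :=
    fun i => differentiable_pi.mp hs i
  have hqi : ∀ i, Differentiable ℝ (fun x : Fin m → ℝ => q x i) :=
    fun i => differentiable_pi.mp hq i
  have hφ : ∀ i, Differentiable ℝ (fun x : Fin m → ℝ => 1 + β * Real.tanh (s x i)) :=
    fun i => (differentiable_const _).add ((differentiable_const β).mul (myDiffTanh.comp (hsi i)))
  have hψ : ∀ i, Differentiable ℝ (fun x : Fin m → ℝ => Real.exp (ζ i) * Real.tanh (q x i)) :=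
    fun i => (differentiable_const _).mul (myDiffTanh.comp (hqi i))
  let L : Fin k → ((Fin m → ℝ) × (Fin k → ℝ)) →L[ℝ] ℝ := fun i =>
    p.2 i • ((fderiv ℝ (fun x : Fin m → ℝ => 1 + β * Real.tanh (s x i)) p.1).comp
        (ContinuousLinearMap.fst ℝ (Fin m → ℝ) (Fin k → ℝ))) +
      (1 + β * Real.tanh (s p.1 i)) •
        ((ContinuousLinearMap.proj i).comp (ContinuousLinearMap.snd ℝ (Fin m → ℝ) (Fin k → ℝ))) +
      (fderiv ℝ (fun x : Fin m → ℝ => Real.exp (ζ i) * Real.tanh (q x i)) p.1).comp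
        (ContinuousLinearMap.fst ℝ (Fin m → ℝ) (Fin k → ℝ))
  have hLi : ∀ i, HasFDerivAt (fun pp : (Fin m → ℝ) × (Fin k → ℝ) =>
      pp.2 i * (1 + β * Real.tanh (s pp.1 i)) + Real.exp (ζ i) * Real.tanh (q pp.1 i))
      (L i) p := by
    intro i
    have hA : HasFDerivAt (fun pp : (Fin m → ℝ) × (Fin k → ℝ) => pp.2 i)
        ((ContinuousLinearMap.proj i).comp (ContinuousLinearMap.snd ℝ (Fin m → ℝ) (Fin k → ℝ))) p :=
      ((ContinuousLinearMap.proj i).comp (ContinuousLinearMap.snd ℝ (Fin m → ℝ) (Fin k → ℝ))).hasFDerivAt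
    have hB : HasFDerivAt (fun pp : (Fin m → ℝ) × (Fin k → ℝ) => 1 + β * Real.tanh (s pp.1 i))
        ((fderiv ℝ (fun x : Fin m → ℝ => 1 + β * Real.tanh (s x i)) p.1).comp
          (ContinuousLinearMap.fst ℝ (Fin m → ℝ) (Fin k → ℝ))) p :=
      ((hφ i p.1).hasFDerivAt).comp p hasFDerivAt_fst
    have hC : HasFDerivAt (fun pp : (Fin m → ℝ) × (Fin k → ℝ) => Real.exp (ζ i) * Real.tanh (q pp.1 i))
        ((fderiv ℝ (fun x : Fin m → ℝ => Real.exp (ζ i) * Real.tanh (q x i)) p.1).comp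
          (ContinuousLinearMap.fst ℝ (Fin m → ℝ) (Fin k → ℝ))) p :=
      ((hψ i p.1).hasFDerivAt).comp p hasFDerivAt_fst
    exact (hA.mul hB).add hC
  have hT : HasFDerivAt (fun p : (Fin m → ℝ) × (Fin k → ℝ) => (p.1, fun i =>
        p.2 i * (1 + β * Real.tanh (s p.1 i)) + Real.exp (ζ i) * Real.tanh (q p.1 i)))
      ((ContinuousLinearMap.fst ℝ (Fin m → ℝ) (Fin k → ℝ)).prod (ContinuousLinearMap.pi L)) p :=
    HasFDerivAt.prodMk hasFDerivAt_fst (hasFDerivAt_pi.2 hLi)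
  refine ⟨hT.differentiableAt, ?_, Finset.prod_pos (fun i _ => hpos i)⟩
  rw [hT.fderiv]
  let Lc : ((Fin m → ℝ) × (Fin k → ℝ)) →L[ℝ] ((Fin m → ℝ) × (Fin k → ℝ)) :=
    (ContinuousLinearMap.fst ℝ (Fin m → ℝ) (Fin k → ℝ)).prod (ContinuousLinearMap.pi L)
  let b : Module.Basis (Fin m ⊕ Fin k) ℝ ((Fin m → ℝ) × (Fin k → ℝ)) :=
    (Pi.basisFun ℝ (Fin m)).prod (Pi.basisFun ℝ (Fin k))
  have hdet : Lc.det = LinearMap.det (Lc : ((Fin m → ℝ) × (Fin k → ℝ)) →ₗ[ℝ] ((Fin m → ℝ) × (Fin k → ℝ))) := rfl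
  show Lc.det = _
  rw [hdet, ← LinearMap.det_toMatrix b]
  let M := LinearMap.toMatrix b b (Lc : ((Fin m → ℝ) × (Fin k → ℝ)) →ₗ[ℝ] ((Fin m → ℝ) × (Fin k → ℝ)))
  let C : Matrix (Fin k) (Fin m) ℝ := Matrix.of fun i j => M (Sum.inr i) (Sum.inl j)
  have hMeq : M = Matrix.fromBlocks 1 0 C
      (Matrix.diagonal fun i => 1 + β * Real.tanh (s p.1 i)) := by
    ext u v
    have hrepr : ∀ (x : (Fin m → ℝ) × (Fin k → ℝ)) (u : Fin m ⊕ Fin k), b.repr x u =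
        Sum.elim (fun i => x.1 i) (fun i => x.2 i) u := by
      intro x u
      cases u with
      | inl i => simp [b, Pi.basisFun_repr]
      | inr i => simp [b, Pi.basisFun_repr]
    rcases u with i | i <;> rcases v with j | j
    · rw [show M (Sum.inl i) (Sum.inl j) = _ from LinearMap.toMatrix_apply _ _ _ _ _, hrepr]
      simp [b, Module.Basis.prod_apply, Lc, Matrix.one_apply, Pi.single_apply, eq_comm]
    · rw [show M (Sum.inl i) (Sum.inr j) = _ from LinearMap.toMatrix_apply _ _ _ _ _, hrepr]
      simp [b, Module.Basis.prod_apply, Lc]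
    · simp [C, Matrix.fromBlocks]
    · rw [show M (Sum.inr i) (Sum.inr j) = _ from LinearMap.toMatrix_apply _ _ _ _ _, hrepr]
      simp only [b, Lc, L, Module.Basis.prod_apply, Matrix.fromBlocks_apply₂₂,
        Matrix.diagonal_apply, Sum.elim_inr, ContinuousLinearMap.coe_prod,
        ContinuousLinearMap.coe_pi, LinearMap.prod_apply, LinearMap.pi_apply,
        LinearMap.add_apply, LinearMap.smul_apply, LinearMap.coe_comp,
        Function.comp_apply, LinearMap.fst_apply, LinearMap.snd_apply,
        ContinuousLinearMap.coe_coe, ContinuousLinearMap.proj_apply,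
        LinearMap.inr_apply, LinearMap.inl_apply, Pi.basisFun_apply, map_zero,
        smul_eq_mul, mul_zero, zero_add, add_zero, Pi.single_apply]
      by_cases hij : i = j <;> simp [hij, eq_comm]
  show M.det = _
  rw [hMeq, Matrix.det_fromBlocks_zero₁₂, Matrix.det_one, one_mul, Matrix.det_diagonal]

/-- The affine coupling layer `T(x₁, x₂) = (x₁, x₂ ⊙ (𝟙 + β tanh(s(x₁))) + e^ζ ⊙ tanh(q(x₁)))`. -/
noncomputable def couplingT (m k : ℕ) (s q : (Fin m → ℝ) → Fin k → ℝ)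
    (ζ : Fin k → ℝ) (β : ℝ) :
    (Fin m → ℝ) × (Fin k → ℝ) → (Fin m → ℝ) × (Fin k → ℝ) :=
  fun p => (p.1, fun i =>
    p.2 i * (1 + β * Real.tanh (s p.1 i)) + Real.exp (ζ i) * Real.tanh (q p.1 i))

theorem stmt11 (d m : ℕ) (hd : 2 ≤ d) (hm : 1 ≤ m) (hmd : m < d)
    (s q : (Fin m → ℝ) → Fin (d - m) → ℝ)
    (hs : Differentiable ℝ s) (hq : Differentiable ℝ q)
    (ζ : Fin (d - m) → ℝ) (β : ℝ) (hβ : |β| < 1)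
    (p : (Fin m → ℝ) × (Fin (d - m) → ℝ)) :
    DifferentiableAt ℝ (couplingT m (d - m) s q ζ β) p ∧
    (fderiv ℝ (couplingT m (d - m) s q ζ β) p).det =
      ∏ i : Fin (d - m), (1 + β * Real.tanh (s p.1 i)) ∧
    0 < ∏ i : Fin (d - m), (1 + β * Real.tanh (s p.1 i)) :=
  coupling_main m (d - m) s q hs hq ζ β hβ p
end
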